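/- Let g: [1,∞) → [1,∞) be such that x ↦ g(x)/(log log x)^{1+ε} is non-decreasing (for x large) for some ε > 0. Fix m₀ > 1 and suppose k_s, l_s ≥ 1 satisfy g(k_s·l_s) = l_s and log log k_s ≤ l_s. Then g(m₀·l_s·exp(exp(m₀·l_s))) ≥ m₀^{1+ε}·l_s·(l_s/(l_s + log log l_s))^{1+ε}; in particular, if l_s is sufficiently large this is at least m₀·l_s. -/
import Mathlib

open Real Filter

/-- If `x ↦ g(x)/(log log x)^(1+ε)` is non-decreasing for large `x`, `m₀ > 1`, and
`k, l ≥ 1` satisfy `g(k·l) = l` and `log log k ≤ l`, then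
`g(m₀·l·exp(exp(m₀·l))) ≥ m₀^(1+ε)·l·(l/(l + log log l))^(1+ε)`, and in particular
for `l` sufficiently large this is at least `m₀·l`. -/
theorem approx_loglog (g : ℝ → ℝ) (ε m₀ : ℝ) (hε : 0 < ε) (hm₀ : 1 < m₀)
    (hmono : MonotoneOn (fun x => g x / Real.log (Real.log x) ^ (1 + ε))
      (Set.Ici (Real.exp (Real.exp 1)))) :
    (∀ k l : ℝ, 1 ≤ k → Real.exp (Real.exp 1) ≤ l →
      g (k * l) = l → Real.log (Real.log k) ≤ l →
      m₀ ^ (1 + ε) * l * (l / (l + Real.log (Real.log l))) ^ (1 + ε) ≤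
        g (m₀ * l * Real.exp (Real.exp (m₀ * l)))) ∧
    (∃ L : ℝ, ∀ k l : ℝ, 1 ≤ k → L ≤ l →
      g (k * l) = l → Real.log (Real.log k) ≤ l →
      m₀ * l ≤ g (m₀ * l * Real.exp (Real.exp (m₀ * l)))) := by
  have hεe : (0:ℝ) < 1 + ε := by linarith
  have hm₀0 : (0:ℝ) < m₀ := by linarith
  have he2 : (2:ℝ) ≤ Real.exp 1 := by
    have := Real.add_one_le_exp 1; linarith
  have main : ∀ k l : ℝ, 1 ≤ k → Real.exp (Real.exp 1) ≤ l →
      g (k * l) = l → Real.log (Real.log k) ≤ l →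
      m₀ ^ (1 + ε) * l * (l / (l + Real.log (Real.log l))) ^ (1 + ε) ≤
        g (m₀ * l * Real.exp (Real.exp (m₀ * l))) := by
    intro k l hk hl hg hllk
    have hk0 : (0:ℝ) < k := lt_of_lt_of_le one_pos hk
    have hee : (3:ℝ) ≤ Real.exp (Real.exp 1) := by
      have := Real.add_one_le_exp (Real.exp 1); linarith
    have hl0 : (0:ℝ) < l := by linarith
    have hlogl : Real.exp 1 ≤ Real.log l := by
      rw [← Real.log_exp (Real.exp 1)]
      exact Real.log_le_log (Real.exp_pos _) hl
    have hlogl2 : (2:ℝ) ≤ Real.log l := le_trans he2 hlogl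
    have hlll1 : (1:ℝ) ≤ Real.log (Real.log l) := by
      rw [← Real.log_exp 1]
      exact Real.log_le_log (Real.exp_pos _) hlogl
    have hlogk0 : 0 ≤ Real.log k := Real.log_nonneg hk
    have hlogkel : Real.log k ≤ Real.exp l := by
      rcases le_or_gt (Real.log k) 0 with h | h
      · exact h.trans (Real.exp_pos l).le
      · exact (Real.log_le_iff_le_exp h).mp hllk
    have hexpl2 : (2:ℝ) ≤ Real.exp l := by
      have := Real.add_one_le_exp l; linarith
    have hlogx : Real.log (k * l) = Real.log k + Real.log l :=
      Real.log_mul (ne_of_gt hk0) (ne_of_gt hl0)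
    -- A = log log (k*l)
    set A := Real.log (Real.log (k * l)) with hA
    have hA_pos : (1:ℝ) ≤ A := by
      rw [hA, ← Real.log_exp 1]
      apply Real.log_le_log (Real.exp_pos _)
      rw [hlogx]; linarith
    have hA_ub : A ≤ l + Real.log (Real.log l) := by
      rw [hA, hlogx]
      have h1 : Real.log k + Real.log l ≤ Real.exp l * Real.log l := by
        nlinarith
      calc Real.log (Real.log k + Real.log l)
          ≤ Real.log (Real.exp l * Real.log l) :=
            Real.log_le_log (by linarith) h1
        _ = l + Real.log (Real.log l) := by
            rw [Real.log_mul (Real.exp_ne_zero l) (by linarith), Real.log_exp]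
    -- y and B
    have hml1 : (1:ℝ) ≤ m₀ * l := by nlinarith
    set y := m₀ * l * Real.exp (Real.exp (m₀ * l)) with hy
    have hxy : k * l ≤ y := by
      have hkle : k ≤ Real.exp (Real.exp l) := by
        rw [← Real.log_le_iff_le_exp hk0]
        exact hlogkel
      have hml : l ≤ m₀ * l := by nlinarith
      have h2 : Real.exp (Real.exp l) ≤ Real.exp (Real.exp (m₀ * l)) :=
        Real.exp_le_exp.mpr (Real.exp_le_exp.mpr hml)
      have := Real.exp_pos (Real.exp (m₀ * l))
      calc k * l ≤ Real.exp (Real.exp (m₀ * l)) * l := by nlinarith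
        _ ≤ y := by rw [hy]; nlinarith
    have hxmem : Real.exp (Real.exp 1) ≤ k * l := le_trans hl (by nlinarith)
    have hymem : Real.exp (Real.exp 1) ≤ y := hxmem.trans hxy
    set B := Real.log (Real.log y) with hB
    have hlogy : Real.log y = Real.log (m₀ * l) + Real.exp (m₀ * l) := by
      rw [hy, Real.log_mul (by positivity) (Real.exp_ne_zero _), Real.log_exp]
    have hB_lb : m₀ * l ≤ B := by
      rw [hB]
      calc m₀ * l = Real.log (Real.exp (m₀ * l)) := (Real.log_exp _).symm
        _ ≤ Real.log (Real.log y) := by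
            apply Real.log_le_log (Real.exp_pos _)
            rw [hlogy]
            have : 0 ≤ Real.log (m₀ * l) := Real.log_nonneg hml1
            linarith
    have hB_pos : (0:ℝ) < B := by linarith
    -- apply monotonicity
    have key := hmono hxmem hymem hxy
    simp only [hg] at key
    have hApow : (0:ℝ) < A ^ (1 + ε) := Real.rpow_pos_of_pos (by linarith) _
    have hBpow : (0:ℝ) < B ^ (1 + ε) := Real.rpow_pos_of_pos hB_pos _
    have hgly : l / A ^ (1 + ε) * B ^ (1 + ε) ≤ g y := by
      have h := mul_le_mul_of_nonneg_right key hBpow.le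
      rwa [div_mul_cancel₀ _ (ne_of_gt hBpow)] at h
    have hdenom : (0:ℝ) < l + Real.log (Real.log l) := by linarith
    have hdiv : m₀ * l / (l + Real.log (Real.log l)) ≤ B / A :=
      div_le_div₀ hB_pos.le hB_lb (by linarith) hA_ub
    calc m₀ ^ (1 + ε) * l * (l / (l + Real.log (Real.log l))) ^ (1 + ε)
        = l * (m₀ ^ (1 + ε) * (l / (l + Real.log (Real.log l))) ^ (1 + ε)) := by ring
      _ = l * (m₀ * (l / (l + Real.log (Real.log l)))) ^ (1 + ε) := by
          rw [← Real.mul_rpow hm₀0.le (by positivity)]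
      _ = l * (m₀ * l / (l + Real.log (Real.log l))) ^ (1 + ε) := by
          rw [mul_div_assoc]
      _ ≤ l * (B / A) ^ (1 + ε) := by
          apply mul_le_mul_of_nonneg_left _ hl0.le
          exact Real.rpow_le_rpow (by positivity) hdiv hεe.le
      _ = l * (B ^ (1 + ε) / A ^ (1 + ε)) := by
          rw [Real.div_rpow hB_pos.le (by linarith)]
      _ = l / A ^ (1 + ε) * B ^ (1 + ε) := by ring
      _ ≤ g y := hgly
  refine ⟨main, ?_⟩
  -- part 2
  have htend0 : Tendsto (fun l : ℝ => Real.log (Real.log l) / l) atTop (nhds 0) := by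
    apply squeeze_zero' (g := fun l : ℝ => Real.log l / l)
    · filter_upwards [eventually_ge_atTop (Real.exp (Real.exp 1))] with l hl
      have : (1:ℝ) ≤ Real.log (Real.log l) := by
        rw [← Real.log_exp 1]
        apply Real.log_le_log (Real.exp_pos _)
        rw [← Real.log_exp (Real.exp 1)]
        exact Real.log_le_log (Real.exp_pos _) hl
      have hl0 : (0:ℝ) < l := lt_of_lt_of_le (Real.exp_pos _) hl
      positivity
    · filter_upwards [eventually_ge_atTop (3:ℝ)] with l hl
      have hl0 : (0:ℝ) < l := by linarith
      gcongr
      · exact Real.log_pos (by linarith)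
      · exact Real.log_le_self (by linarith)
    · exact Real.isLittleO_log_id_atTop.tendsto_div_nhds_zero
  have htend1 : Tendsto (fun l : ℝ => m₀ ^ ε * (l / (l + Real.log (Real.log l))) ^ (1 + ε))
      atTop (nhds (m₀ ^ ε)) := by
    have h1 : Tendsto (fun l : ℝ => l / (l + Real.log (Real.log l))) atTop (nhds 1) := by
      have h2 : Tendsto (fun l : ℝ => 1 / (1 + Real.log (Real.log l) / l)) atTop (nhds 1) := by
        have h3 := htend0.const_add (1:ℝ)
        have h4 := Filter.Tendsto.div
          (tendsto_const_nhds : Tendsto (fun _ : ℝ => (1:ℝ)) atTop (nhds 1)) h3 (by norm_num)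
        simpa [Pi.div_def, one_div] using h4
      apply h2.congr'
      filter_upwards [eventually_gt_atTop (0:ℝ)] with l hl0
      have e1 : 1 + Real.log (Real.log l) / l = (l + Real.log (Real.log l)) / l := by
        field_simp
      rw [e1, one_div_div]
      
    have h4 := h1.rpow_const (p := 1 + ε) (Or.inr hεe.le)
    rw [Real.one_rpow] at h4
    simpa using h4.const_mul (m₀ ^ ε)
  have hgt : (1:ℝ) < m₀ ^ ε := Real.one_lt_rpow_iff_of_pos hm₀0 |>.mpr (Or.inl ⟨hm₀, hε⟩)
  have hev : ∀ᶠ l in atTop,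
      1 ≤ m₀ ^ ε * (l / (l + Real.log (Real.log l))) ^ (1 + ε) :=
    htend1.eventually (eventually_ge_nhds hgt)
  obtain ⟨L₀, hL₀⟩ :=
    eventually_atTop.mp (hev.and (eventually_ge_atTop (Real.exp (Real.exp 1))))
  refine ⟨L₀, fun k l hk hl hg hllk => ?_⟩
  obtain ⟨h1, h2⟩ := hL₀ l hl
  have hl0 : (0:ℝ) ≤ l := le_trans (Real.exp_pos _).le h2
  calc m₀ * l = m₀ * l * 1 := by ring
    _ ≤ m₀ * l * (m₀ ^ ε * (l / (l + Real.log (Real.log l))) ^ (1 + ε)) := by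
        apply mul_le_mul_of_nonneg_left h1 (by positivity)
    _ = m₀ ^ (1 + ε) * l * (l / (l + Real.log (Real.log l))) ^ (1 + ε) := by
        rw [Real.rpow_add hm₀0, Real.rpow_one]; ring
    _ ≤ g (m₀ * l * Real.exp (Real.exp (m₀ * l))) := main k l hk h2 hg hllk
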